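/- With Ω the disk-slice {(x,y) : α < x < β, -√(1-x²) < y < √(1-x²)} for 0 < α < β < 1, ρ(x) = √(1-x²), and H_{n,k}^{(a,b,c)}(x,y) := R_{n-k}^{(a,b,2c+2k+1)}(x) ρ(x)^k P_k^{(c,c)}(y/ρ(x)), where R_m^{(a,b,c)} are orthonormal on (α,β) with respect to (β-x)^a (x-α)^b ρ(x)^c and P_k^{(c,c)} are orthonormal Jacobi polynomials on (-1,1) with respect to (1-x²)^c, one has ⟨H_{n,k}^{(a,b,c)}, H_{m,j}^{(a,b,c)}⟩_{W^{(a,b,c)}} = ω_R^{(a,b,2c+2k+1)} ω_P^{(c)} δ_{n,m} δ_{k,j}, where W^{(a,b,c)}(x,y) = (β-x)^a (x-α)^b (1-x²-y²)^c, ω_R^{(a,b,c)} = ∫_α^β (β-x)^a (x-α)^b ρ(x)^c dx and ω_P^{(c)} = ∫_{-1}^1 (1-t²)^c dt. -/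

import Mathlib

open MeasureTheory Set

noncomputable def Amap (r d t : ℝ) : (ℝ × ℝ) →L[ℝ] (ℝ × ℝ) :=
  (ContinuousLinearMap.fst ℝ ℝ ℝ).prod
    (r • ContinuousLinearMap.snd ℝ ℝ ℝ + t • (d • ContinuousLinearMap.fst ℝ ℝ ℝ))

lemma Amap_det (r d t : ℝ) : (Amap r d t).det = r := by
  have h : (Amap r d t).det = LinearMap.det ((Amap r d t) : (ℝ × ℝ) →ₗ[ℝ] (ℝ × ℝ)) := rfl
  rw [h, ← LinearMap.det_toMatrix (Module.Basis.finTwoProd ℝ), Matrix.det_fin_two]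
  simp [LinearMap.toMatrix_apply, Amap, Module.Basis.finTwoProd_zero, Module.Basis.finTwoProd_one,
    Module.Basis.coe_finTwoProd_repr]

lemma phi_deriv (x t : ℝ) (hx : 1 - x ^ 2 ≠ 0) :
    HasFDerivAt (fun p : ℝ × ℝ => (p.1, Real.sqrt (1 - p.1 ^ 2) * p.2))
      (Amap (Real.sqrt (1 - x ^ 2)) (1 / (2 * Real.sqrt (1 - x ^ 2)) * (0 - 2 * x ^ 1)) t)
      (x, t) := by
  have h1 : HasDerivAt (fun x : ℝ => 1 - x ^ 2) (0 - 2 * x ^ 1) x :=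
    (hasDerivAt_const x 1).sub (hasDerivAt_pow 2 x)
  have h2 : HasDerivAt (fun x : ℝ => Real.sqrt (1 - x ^ 2))
      (1 / (2 * Real.sqrt (1 - x ^ 2)) * (0 - 2 * x ^ 1)) x :=
    (Real.hasDerivAt_sqrt hx).comp x h1
  have h3 : HasFDerivAt (fun p : ℝ × ℝ => Real.sqrt (1 - p.1 ^ 2))
      ((1 / (2 * Real.sqrt (1 - x ^ 2)) * (0 - 2 * x ^ 1)) • ContinuousLinearMap.fst ℝ ℝ ℝ)
      (x, t) :=
    by have := h2.comp_hasFDerivAt (x, t) (hasFDerivAt_fst (𝕜 := ℝ) (p := (x, t))); exact this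
  have h4 := h3.mul (hasFDerivAt_snd (𝕜 := ℝ) (p := (x, t)))
  exact HasFDerivAt.prodMk (hasFDerivAt_fst (𝕜 := ℝ) (p := (x, t))) h4

theorem stmt1
    (α β : ℝ) (h0 : 0 < α) (hαβ : α < β) (hβ : β < 1)
    (a b c : ℝ)
    (R : ℝ → ℕ → ℝ → ℝ) (P : ℕ → ℝ → ℝ)
    (ωR : ℝ → ℝ) (ωP : ℝ)
    (hωR : ∀ e, ωR e =
      ∫ x in Ioo α β, (β - x) ^ a * (x - α) ^ b * Real.sqrt (1 - x ^ 2) ^ e)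
    (hωP : ωP = ∫ t in Ioo (-1 : ℝ) 1, (1 - t ^ 2) ^ c)
    (hRorth : ∀ e m n, (1 / ωR e) * ∫ x in Ioo α β,
        R e m x * R e n x * ((β - x) ^ a * (x - α) ^ b * Real.sqrt (1 - x ^ 2) ^ e)
        = if m = n then 1 else 0)
    (hRpoly : ∀ e m, ∃ p : Polynomial ℝ, p.natDegree = m ∧ ∀ x, R e m x = p.eval x)
    (hPorth : ∀ k j, (1 / ωP) * ∫ t in Ioo (-1 : ℝ) 1,
        P k t * P j t * (1 - t ^ 2) ^ c = if k = j then 1 else 0)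
    (hPpoly : ∀ k, ∃ p : Polynomial ℝ, p.natDegree = k ∧ ∀ t, P k t = p.eval t)
    (Ω : Set (ℝ × ℝ))
    (hΩ : Ω = {z : ℝ × ℝ | α < z.1 ∧ z.1 < β ∧ z.2 ^ 2 < 1 - z.1 ^ 2})
    (H : ℕ → ℕ → ℝ × ℝ → ℝ)
    (hH : ∀ n k z, H n k z = R (2 * c + 2 * (k : ℝ) + 1) (n - k) z.1 *
        Real.sqrt (1 - z.1 ^ 2) ^ (k : ℕ) * P k (z.2 / Real.sqrt (1 - z.1 ^ 2)))
    (W : ℝ × ℝ → ℝ)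
    (hW : ∀ z : ℝ × ℝ,
      W z = (β - z.1) ^ a * (z.1 - α) ^ b * (1 - z.1 ^ 2 - z.2 ^ 2) ^ c) :
    ∀ n k m j, k ≤ n → j ≤ m →
      ∫ z in Ω, H n k z * H m j z * W z =
        ωR (2 * c + 2 * (k : ℝ) + 1) * ωP *
          ((if n = m then (1 : ℝ) else 0) * (if k = j then (1 : ℝ) else 0)) := by
  intro n k m j hkn hjm
  -- basic positivity facts on the x-range
  have h1x : ∀ x ∈ Ioo α β, 0 < 1 - x ^ 2 := by
    intro x hx
    have hx0 : 0 < x := h0.trans hx.1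
    have hx1 : x < 1 := hx.2.trans hβ
    nlinarith
  set Φ : ℝ × ℝ → ℝ × ℝ := fun p => (p.1, Real.sqrt (1 - p.1 ^ 2) * p.2) with hΦ
  set s : Set (ℝ × ℝ) := Ioo α β ×ˢ Ioo (-1 : ℝ) 1 with hs_def
  have hs : MeasurableSet s := measurableSet_Ioo.prod measurableSet_Ioo
  -- Ω is the image of the rectangle
  have hΩimg : Ω = Φ '' s := by
    rw [hΩ]
    ext z
    obtain ⟨x, y⟩ := z
    simp only [Set.mem_setOf_eq, Set.mem_image, hs_def, Set.mem_prod, Set.mem_Ioo, hΦ,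
      Prod.mk.injEq, Prod.exists]
    constructor
    · rintro ⟨h1, h2, h3⟩
      have hpos : 0 < 1 - x ^ 2 := h1x x ⟨h1, h2⟩
      have hρpos : 0 < Real.sqrt (1 - x ^ 2) := Real.sqrt_pos.2 hpos
      have hy : |y| < Real.sqrt (1 - x ^ 2) := by
        rw [← Real.sqrt_sq_eq_abs]
        exact Real.sqrt_lt_sqrt (sq_nonneg y) h3
      have hy' := abs_lt.1 hy
      refine ⟨x, y / Real.sqrt (1 - x ^ 2), ⟨⟨h1, h2⟩, ?_, ?_⟩, rfl, ?_⟩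
      · rw [lt_div_iff₀ hρpos]; linarith
      · rw [div_lt_one hρpos]; exact hy'.2
      · field_simp
    · rintro ⟨x', t, ⟨hx', ht⟩, hxx, hyy⟩
      subst hxx; subst hyy
      have hpos : 0 < 1 - x' ^ 2 := h1x x' hx'
      refine ⟨hx'.1, hx'.2, ?_⟩
      rw [mul_pow, Real.sq_sqrt hpos.le]
      have htt : t ^ 2 < 1 := by nlinarith [ht.1, ht.2]
      nlinarith [mul_lt_mul_of_pos_left htt hpos]
  -- derivative of Φ on s
  have hf' : ∀ p ∈ s, HasFDerivWithinAt Φ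
      (Amap (Real.sqrt (1 - p.1 ^ 2))
        (1 / (2 * Real.sqrt (1 - p.1 ^ 2)) * (0 - 2 * p.1 ^ 1)) p.2) s p := by
    rintro ⟨x, t⟩ hp
    exact (phi_deriv x t (ne_of_gt (h1x x hp.1))).hasFDerivWithinAt
  -- injectivity of Φ on s
  have hinj : Set.InjOn Φ s := by
    rintro ⟨x1, t1⟩ h1 ⟨x2, t2⟩ h2 heq
    simp only [hΦ, Prod.mk.injEq] at heq
    obtain ⟨he1, he2⟩ := heq
    subst he1
    have hρpos : 0 < Real.sqrt (1 - x1 ^ 2) := Real.sqrt_pos.2 (h1x x1 h1.1)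
    have : t1 = t2 := mul_left_cancel₀ (ne_of_gt hρpos) he2
    rw [this]
  rw [hΩimg, integral_image_eq_integral_abs_det_fderiv_smul volume hs hf' hinj]
  -- rewrite the integrand as a product f(x) * g(t)
  have hcongr : ∀ p ∈ s,
      |(Amap (Real.sqrt (1 - p.1 ^ 2))
        (1 / (2 * Real.sqrt (1 - p.1 ^ 2)) * (0 - 2 * p.1 ^ 1)) p.2).det| •
        (H n k (Φ p) * H m j (Φ p) * W (Φ p)) =
      (fun x => R (2 * c + 2 * (k : ℝ) + 1) (n - k) x * R (2 * c + 2 * (j : ℝ) + 1) (m - j) x *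
        ((β - x) ^ a * (x - α) ^ b *
          Real.sqrt (1 - x ^ 2) ^ ((k : ℝ) + (j : ℝ) + 2 * c + 1))) p.1 *
      (fun t => P k t * P j t * (1 - t ^ 2) ^ c) p.2 := by
    rintro ⟨x, t⟩ hp
    have hpos : 0 < 1 - x ^ 2 := h1x x hp.1
    have hρpos : 0 < Real.sqrt (1 - x ^ 2) := Real.sqrt_pos.2 hpos
    have hρ2 : Real.sqrt (1 - x ^ 2) ^ 2 = 1 - x ^ 2 := Real.sq_sqrt hpos.le
    have ht2 : 0 < 1 - t ^ 2 := by
      have := hp.2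
      nlinarith [this.1, this.2]
    rw [Amap_det, abs_of_pos hρpos, hH, hH, hW, smul_eq_mul]
    dsimp only [hΦ]
    rw [mul_div_cancel_left₀ _ (ne_of_gt hρpos)]
    rw [show (1 - x ^ 2 - (Real.sqrt (1 - x ^ 2) * t) ^ 2 : ℝ)
        = (1 - x ^ 2) * (1 - t ^ 2) from by rw [mul_pow, hρ2]; ring]
    rw [Real.mul_rpow hpos.le ht2.le]
    have hpow : Real.sqrt (1 - x ^ 2) ^ k * Real.sqrt (1 - x ^ 2) ^ j *
        (1 - x ^ 2) ^ c * Real.sqrt (1 - x ^ 2)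
        = Real.sqrt (1 - x ^ 2) ^ ((k : ℝ) + (j : ℝ) + 2 * c + 1) := by
      have e1 : (1 - x ^ 2 : ℝ) ^ c = Real.sqrt (1 - x ^ 2) ^ (2 * c) := by
        rw [Real.rpow_mul (Real.sqrt_nonneg _), Real.rpow_two, hρ2]
      rw [e1, ← Real.rpow_natCast (Real.sqrt (1 - x ^ 2)) k,
        ← Real.rpow_natCast (Real.sqrt (1 - x ^ 2)) j,
        ← Real.rpow_add hρpos, ← Real.rpow_add hρpos,
        ← Real.rpow_add_one (ne_of_gt hρpos)]
    rw [← hpow]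
    ring
  rw [setIntegral_congr_fun hs hcongr, Measure.volume_eq_prod ℝ ℝ, hs_def]
  rw [setIntegral_prod_mul
    (fun x => R (2 * c + 2 * (k : ℝ) + 1) (n - k) x * R (2 * c + 2 * (j : ℝ) + 1) (m - j) x *
      ((β - x) ^ a * (x - α) ^ b * Real.sqrt (1 - x ^ 2) ^ ((k : ℝ) + (j : ℝ) + 2 * c + 1)))
    (fun t => P k t * P j t * (1 - t ^ 2) ^ c) (Ioo α β) (Ioo (-1 : ℝ) 1)]
  -- evaluate the t-integral
  have hωP0 : ωP ≠ 0 := by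
    intro h0'
    have := hPorth k k
    simp [h0'] at this
  have hPint : (∫ t in Ioo (-1 : ℝ) 1, P k t * P j t * (1 - t ^ 2) ^ c)
      = ωP * (if k = j then (1 : ℝ) else 0) := by
    rw [← hPorth k j]
    field_simp
  rw [hPint]
  by_cases hkj : k = j
  · subst hkj
    rw [show ((k : ℝ) + (k : ℝ) + 2 * c + 1) = 2 * c + 2 * (k : ℝ) + 1 by ring]
    have hωR0 : ωR (2 * c + 2 * (k : ℝ) + 1) ≠ 0 := by
      intro h0'
      have := hRorth (2 * c + 2 * (k : ℝ) + 1) (n - k) (n - k)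
      simp [h0'] at this
    have hRint : (∫ x in Ioo α β, R (2 * c + 2 * (k : ℝ) + 1) (n - k) x *
        R (2 * c + 2 * (k : ℝ) + 1) (m - k) x *
        ((β - x) ^ a * (x - α) ^ b *
          Real.sqrt (1 - x ^ 2) ^ (2 * c + 2 * (k : ℝ) + 1)))
        = ωR (2 * c + 2 * (k : ℝ) + 1) * (if n - k = m - k then (1 : ℝ) else 0) := by
      rw [← hRorth (2 * c + 2 * (k : ℝ) + 1) (n - k) (m - k)]
      field_simp
      rw [show (2 * (c + (k : ℝ)) + 1) = 2 * c + 2 * (k : ℝ) + 1 by ring]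
      exact (mul_div_cancel_right₀ _ hωR0).symm
    rw [hRint]
    have hif : (if n - k = m - k then (1 : ℝ) else 0) = (if n = m then (1 : ℝ) else 0) := by
      by_cases h : n = m
      · have h2 : n - k = m - k := by omega
        simp [h, h2]
      · have h2 : ¬(n - k = m - k) := by omega
        simp [h, h2]
    rw [hif]
    ring
  · simp only [hkj, if_false]
    ring
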